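/- Let q ≥ 2 be an integer and let r be an integer with r ≥ q(q−1). Then the number of pairs (i,j) of nonnegative integers with j ≤ q−1 and qi + (q+1)j < r equals r − q(q−1)/2. -/

import Mathlib

lemma tri_finite (k : ℕ) : {p : ℕ × ℕ | p.1 + p.2 ≤ k}.Finite := by
  apply Set.Finite.subset ((Set.finite_Iic k).prod (Set.finite_Iic k))
  rintro ⟨a, b⟩ h
  simp only [Set.mem_setOf_eq] at h
  exact ⟨by simpa using by omega, by simpa using by omega⟩

lemma tri_card (k : ℕ) : Set.ncard {p : ℕ × ℕ | p.1 + p.2 ≤ k} = (k + 1) * (k + 2) / 2 := by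
  induction k with
  | zero =>
    have : {p : ℕ × ℕ | p.1 + p.2 ≤ 0} = {((0 : ℕ), (0 : ℕ))} := by
      ext ⟨a, b⟩
      simp only [Set.mem_setOf_eq, Set.mem_singleton_iff, Prod.mk.injEq]
      omega
    rw [this, Set.ncard_singleton]
  | succ k ih =>
    have hsplit : {p : ℕ × ℕ | p.1 + p.2 ≤ k + 1} =
        {p : ℕ × ℕ | p.1 + p.2 ≤ k} ∪ ↑(Finset.HasAntidiagonal.antidiagonal (k + 1)) := by
      ext ⟨a, b⟩
      simp only [Set.mem_setOf_eq, Set.mem_union, Finset.coe_sort_coe, Finset.mem_coe,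
        Finset.HasAntidiagonal.mem_antidiagonal]
      omega
    have hdisj : Disjoint {p : ℕ × ℕ | p.1 + p.2 ≤ k} (↑(Finset.HasAntidiagonal.antidiagonal (k + 1)) : Set (ℕ × ℕ)) := by
      rw [Set.disjoint_left]
      rintro ⟨a, b⟩ h1 h2
      simp only [Set.mem_setOf_eq] at h1
      simp only [Finset.mem_coe, Finset.HasAntidiagonal.mem_antidiagonal] at h2
      omega
    rw [hsplit, Set.ncard_union_eq hdisj (tri_finite k) (Finset.HasAntidiagonal.antidiagonal (k + 1)).finite_toSet,
      ih, Set.ncard_coe_finset, Finset.Nat.card_antidiagonal]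
    have h1 : (k + 2) * (k + 3) = (k + 1) * (k + 2) + 2 * (k + 2) := by ring
    rw [h1, Nat.add_mul_div_left _ _ (by norm_num : (0:ℕ) < 2)]

lemma herm_finite (q r : ℕ) (hq : 1 ≤ q) :
    {p : ℕ × ℕ | p.2 ≤ q - 1 ∧ q * p.1 + (q + 1) * p.2 < r}.Finite := by
  apply Set.Finite.subset ((Set.finite_Iic r).prod (Set.finite_Iic q))
  rintro ⟨a, b⟩ h
  simp only [Set.mem_setOf_eq] at h
  obtain ⟨h1, h2⟩ := h
  have ha : a ≤ q * a := Nat.le_mul_of_pos_left a hq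
  constructor
  · simp only [Set.mem_Iic]; omega
  · simp only [Set.mem_Iic]; omega

/-- Let `q ≥ 2` and let `r ≥ q(q−1)`. The number of pairs `(i,j)` of nonnegative
integers with `j ≤ q − 1` and `q·i + (q+1)·j < r` equals `r − q(q−1)/2`. -/
theorem hermitian_monomial_count (q r : ℕ) (hq : 2 ≤ q) (hr : q * (q - 1) ≤ r) :
    Set.ncard {p : ℕ × ℕ | p.2 ≤ q - 1 ∧ q * p.1 + (q + 1) * p.2 < r} =
      r - q * (q - 1) / 2 := by
  induction r, hr using Nat.le_induction with
  | base =>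
    obtain ⟨k, rfl⟩ : ∃ k, q = k + 2 := ⟨q - 2, by omega⟩
    have h21 : k + 2 - 1 = k + 1 := rfl
    rw [h21]
    have hset : {p : ℕ × ℕ | p.2 ≤ k + 1 ∧ (k + 2) * p.1 + (k + 2 + 1) * p.2 < (k + 2) * (k + 1)} =
        {p : ℕ × ℕ | p.1 + p.2 ≤ k} := by
      ext ⟨a, b⟩
      simp only [Set.mem_setOf_eq]
      constructor
      · rintro ⟨h1, h2⟩
        have h3 : (k + 2) * (a + b) < (k + 2) * (k + 1) := by nlinarith [h1, h2]
        have h4 : a + b < k + 1 := lt_of_mul_lt_mul_left h3 (by omega)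
        omega
      · intro h
        have hb : b ≤ k := by omega
        have hm : (k + 2) * (a + b) ≤ (k + 2) * k := Nat.mul_le_mul_left (k + 2) h
        constructor
        · omega
        · nlinarith [hm, hb]
    rw [hset, tri_card k]
    have heq : (k + 2) * (k + 1) = (k + 1) * (k + 2) := Nat.mul_comm _ _
    rw [heq]
    have he : Even ((k + 1) * (k + 2)) := Nat.even_mul_succ_self (k + 1)
    obtain ⟨m, hm⟩ := he
    omega
  | succ r hr ih =>
    have hq1 : 0 < q := by omega
    have hdiv : q - 1 ≤ r / q := by
      rw [Nat.le_div_iff_mul_le hq1]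
      calc (q - 1) * q = q * (q - 1) := by ring
        _ ≤ r := hr
    have hmodlt : r % q < q := Nat.mod_lt r hq1
    have hmd : r % q ≤ r / q := by omega
    have hdm : q * (r / q) + r % q = r := Nat.div_add_mod r q
    have hval : q * (r / q - r % q) + (q + 1) * (r % q) = r := by
      have h1 : q * (r / q - r % q) + (q + 1) * (r % q)
          = q * ((r / q - r % q) + r % q) + r % q := by ring
      rw [h1, Nat.sub_add_cancel hmd, hdm]
    have hkey : {p : ℕ × ℕ | p.2 ≤ q - 1 ∧ q * p.1 + (q + 1) * p.2 < r + 1} =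
        insert (r / q - r % q, r % q) {p : ℕ × ℕ | p.2 ≤ q - 1 ∧ q * p.1 + (q + 1) * p.2 < r} := by
      ext ⟨a, b⟩
      simp only [Set.mem_setOf_eq, Set.mem_insert_iff, Prod.mk.injEq]
      constructor
      · rintro ⟨h1, h2⟩
        by_cases hlt : q * a + (q + 1) * b < r
        · exact Or.inr ⟨h1, hlt⟩
        · left
          have heq : q * a + (q + 1) * b = r := by omega
          have hb : b < q := by omega
          have hrw : q * (a + b) + b = r := by
            have : q * (a + b) + b = q * a + (q + 1) * b := by ring
            omega
          have hmod : r % q = b := by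
            rw [← hrw, Nat.mul_add_mod, Nat.mod_eq_of_lt hb]
          have hdiv2 : r / q = a + b := by
            rw [← hrw, Nat.mul_add_div hq1, Nat.div_eq_of_lt hb]
            omega
          constructor
          · omega
          · omega
      · rintro (⟨ha, hb⟩ | ⟨h1, h2⟩)
        · subst ha; subst hb
          exact ⟨by omega, by omega⟩
        · exact ⟨h1, by omega⟩
    have hnot : (r / q - r % q, r % q) ∉ {p : ℕ × ℕ | p.2 ≤ q - 1 ∧ q * p.1 + (q + 1) * p.2 < r} := by
      intro h
      simp only [Set.mem_setOf_eq] at h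
      omega
    rw [hkey, Set.ncard_insert_of_notMem hnot (herm_finite q r (by omega)), ih]
    have hle : q * (q - 1) / 2 ≤ r := le_trans (Nat.div_le_self _ _) hr
    omega
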